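/- Let n be an even positive integer and p a prime with p-1 \nmid n. Then B_n/n is a p-integer, i.e., the denominator of B_n/n is not divisible by p. -/

import Mathlib

open Finset


private lemma inv_mod_aux {x y N : ℕ} (hN : 1 < N) (h : x * y % N = 1) :
    ∀ a < N, (y * (x * a % N)) % N = a := by
  intro a ha
  have h1 : y * (x * a % N) ≡ y * (x * a) [MOD N] :=
    Nat.ModEq.mul_left _ (Nat.mod_modEq _ _)
  have h2 : x * y ≡ 1 [MOD N] := by
    unfold Nat.ModEq; rw [h, Nat.mod_eq_of_lt hN]
  have h3 : y * (x * a) = x * y * a := by ring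
  have h4 : y * (x * a % N) ≡ a [MOD N] := by
    calc y * (x * a % N) ≡ y * (x * a) [MOD N] := h1
    _ = x * y * a := h3
    _ ≡ 1 * a [MOD N] := Nat.ModEq.mul_right _ h2
    _ = a := one_mul a
  calc (y * (x * a % N)) % N = a % N := h4
  _ = a := Nat.mod_eq_of_lt ha

lemma perm_sum (g N : ℕ) (hN : 1 < N) (hg : Nat.Coprime g N) (f : ℕ → ℤ) :
    ∑ j ∈ range N, f ((g * j) % N) = ∑ j ∈ range N, f j := by
  obtain ⟨g', -, hg'⟩ := Nat.exists_mul_mod_eq_one_of_coprime hg hN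
  have hg'2 : g' * g % N = 1 := by rwa [Nat.mul_comm]
  refine Finset.sum_nbij' (fun j => (g * j) % N) (fun j => (g' * j) % N) ?_ ?_ ?_ ?_ ?_
  · intro a _; exact mem_range.2 (Nat.mod_lt _ (by omega))
  · intro a _; exact mem_range.2 (Nat.mod_lt _ (by omega))
  · intro a ha; exact inv_mod_aux hN hg' a (mem_range.1 ha)
  · intro a ha; exact inv_mod_aux hN hg'2 a (mem_range.1 ha)
  · intro a _; rfl


lemma binom_aux (a b : ℤ) (m : ℕ) :
    ∃ c : ℤ, (a + b) ^ (m + 1) = a ^ (m + 1) + ((m : ℤ) + 1) * a ^ m * b + b ^ 2 * c := by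
  induction m with
  | zero => exact ⟨0, by ring⟩
  | succ m ih =>
    obtain ⟨c, hc⟩ := ih
    refine ⟨a * c + (m + 1) * a ^ m + b * c, ?_⟩
    calc (a + b) ^ (m + 2) = (a + b) * (a + b) ^ (m + 1) := by ring
    _ = (a + b) * (a ^ (m + 1) + (↑m + 1) * a ^ m * b + b ^ 2 * c) := by rw [hc]
    _ = a ^ (m + 2) + (↑(m + 1) + 1) * a ^ (m + 1) * b
        + b ^ 2 * (a * c + (m + 1) * a ^ m + b * c) := by push_cast; ring

lemma key_dvd (p : ℕ) (hp : p.Prime) (m : ℕ) (g : ℕ)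
    (hgp : ¬ p ∣ g) (hgn : ¬ (p:ℤ) ∣ ((g:ℤ) ^ (m + 1) - 1)) (e K : ℕ)
    (he : (p:ℤ) ^ e ∣ ((m:ℤ) + 1)) (heK : e ≤ K) (hK : 1 ≤ K) :
    (p:ℤ) ^ (K + e) ∣ ∑ j ∈ range (p ^ K), (j:ℤ) ^ (m + 1) := by
  set N := p ^ K with hNdef
  have hN : 1 < N := Nat.one_lt_pow (by omega) hp.one_lt
  have hNcast : (N : ℤ) = (p : ℤ) ^ K := by rw [hNdef]; push_cast; ring
  set S : ℤ := ∑ j ∈ range N, (j:ℤ) ^ (m + 1) with hS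
  have hg : Nat.Coprime g N := ((hp.coprime_iff_not_dvd.2 hgp).symm.pow_right K)
  set q : ℕ → ℤ := fun j => ((g : ℤ) * j) / (N : ℤ) with hq
  have hterm : ∀ j : ℕ, (((g * j) % N : ℕ) : ℤ) = (g : ℤ) * j + (-((N:ℤ) * q j)) := by
    intro j
    have h1 : (((g * j) % N : ℕ) : ℤ) = ((g * j : ℕ) : ℤ) % (N:ℤ) := Int.natCast_mod _ _
    rw [h1, Int.emod_def]
    simp only [hq]
    push_cast
    ring
  have hch : ∀ j : ℕ, ∃ c : ℤ, ((g:ℤ) * j + (-((N:ℤ) * q j))) ^ (m + 1) =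
      ((g:ℤ) * j) ^ (m + 1) + ((m : ℤ) + 1) * ((g:ℤ) * j) ^ m * (-((N:ℤ) * q j)) +
        (-((N:ℤ) * q j)) ^ 2 * c := fun j => binom_aux _ _ m
  choose c hcspec using hch
  have hperm : S = ∑ j ∈ range N, (((g * j) % N : ℕ) : ℤ) ^ (m + 1) :=
    (perm_sum g N hN hg (fun j => (j:ℤ) ^ (m + 1))).symm
  set W : ℤ := ∑ j ∈ range N, ((g:ℤ) * j) ^ m * q j with hW
  set V : ℤ := ∑ j ∈ range N, (q j) ^ 2 * c j with hV
  have hgS : ∑ j ∈ range N, ((g:ℤ) * j) ^ (m + 1) = (g:ℤ) ^ (m + 1) * S := by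
    rw [hS, Finset.mul_sum]
    exact Finset.sum_congr rfl fun j _ => mul_pow _ _ _
  have h2 : ∑ j ∈ range N, (((m : ℤ) + 1) * ((g:ℤ) * j) ^ m * (-((N:ℤ) * q j)))
      = -(((m : ℤ) + 1) * ((N:ℤ) * W)) := by
    rw [hW, Finset.mul_sum, Finset.mul_sum, ← Finset.sum_neg_distrib]
    exact Finset.sum_congr rfl fun j _ => by ring
  have h3 : ∑ j ∈ range N, ((-((N:ℤ) * q j)) ^ 2 * c j) = (N:ℤ) ^ 2 * V := by
    rw [hV, Finset.mul_sum]
    exact Finset.sum_congr rfl fun j _ => by ring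
  have h1 : S = (g:ℤ) ^ (m + 1) * S + (-(((m : ℤ) + 1) * ((N:ℤ) * W))) + (N:ℤ) ^ 2 * V := by
    calc S = ∑ j ∈ range N, (((g * j) % N : ℕ) : ℤ) ^ (m + 1) := hperm
    _ = ∑ j ∈ range N, ((g:ℤ) * j + (-((N:ℤ) * q j))) ^ (m + 1) :=
        Finset.sum_congr rfl fun j _ => by rw [hterm j]
    _ = ∑ j ∈ range N, (((g:ℤ) * j) ^ (m + 1) + ((m : ℤ) + 1) * ((g:ℤ) * j) ^ m * (-((N:ℤ) * q j)) +
          (-((N:ℤ) * q j)) ^ 2 * c j) := Finset.sum_congr rfl fun j _ => hcspec j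
    _ = (∑ j ∈ range N, ((g:ℤ) * j) ^ (m + 1))
        + (∑ j ∈ range N, (((m : ℤ) + 1) * ((g:ℤ) * j) ^ m * (-((N:ℤ) * q j))))
        + (∑ j ∈ range N, ((-((N:ℤ) * q j)) ^ 2 * c j)) := by
        rw [Finset.sum_add_distrib, Finset.sum_add_distrib]
    _ = (g:ℤ) ^ (m + 1) * S + (-(((m : ℤ) + 1) * ((N:ℤ) * W))) + (N:ℤ) ^ 2 * V := by
        rw [hgS, h2, h3]
  have hmain : ((g:ℤ) ^ (m + 1) - 1) * S = (N : ℤ) * (((m : ℤ) + 1) * W - (N:ℤ) * V) := by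
    linear_combination -h1
  have hdvd : (p:ℤ) ^ (K + e) ∣ ((g:ℤ) ^ (m + 1) - 1) * S := by
    rw [hmain, pow_add, hNcast]
    apply mul_dvd_mul dvd_rfl
    apply dvd_sub
    · exact he.mul_right W
    · exact (pow_dvd_pow (p:ℤ) heK).mul_right V
  have hcop : IsCoprime ((p:ℤ) ^ (K + e)) ((g:ℤ) ^ (m + 1) - 1) :=
    ((Nat.prime_iff_prime_int.1 hp).coprime_iff_not_dvd.2 hgn).pow_left
  exact hcop.dvd_of_dvd_mul_left hdvd


lemma exists_gen (p n : ℕ) (hp : p.Prime) (hnd : ¬ (p - 1) ∣ n) :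
    ∃ g : ℕ, ¬ p ∣ g ∧ ¬ (p:ℤ) ∣ ((g:ℤ) ^ n - 1) := by
  haveI : Fact p.Prime := ⟨hp⟩
  obtain ⟨ζ, hζ⟩ := IsCyclic.exists_generator (α := (ZMod p)ˣ)
  have hord : orderOf ζ = p - 1 := by
    rw [orderOf_eq_card_of_forall_mem_zpowers hζ, Nat.card_eq_fintype_card,
      ZMod.card_units_eq_totient, Nat.totient_prime hp]
  refine ⟨((ζ : ZMod p).val), ?_, ?_⟩
  · intro h
    have h0 : ((((ζ : ZMod p).val : ℕ)) : ZMod p) = 0 := (ZMod.natCast_eq_zero_iff _ _).2 h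
    rw [ZMod.natCast_val, ZMod.cast_id] at h0
    exact (Units.ne_zero ζ) h0
  · intro h
    have h0 : ((((ζ : ZMod p).val : ℤ) ^ n - 1 : ℤ) : ZMod p) = 0 :=
      (ZMod.intCast_zmod_eq_zero_iff_dvd _ _).2 h
    push_cast at h0
    rw [ZMod.natCast_val, ZMod.cast_id] at h0
    have hz : (ζ : ZMod p) ^ n = 1 := by linear_combination h0
    have : ζ ^ n = 1 := Units.ext (by push_cast; exact hz)
    exact hnd (hord ▸ orderOf_dvd_of_pow_eq_one this)


lemma padicNorm_pow' (p : ℕ) [Fact p.Prime] (x : ℚ) (k : ℕ) :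
    padicNorm p (x ^ k) = padicNorm p x ^ k := by
  induction k with
  | zero => simp
  | succ k ih => rw [pow_succ, padicNorm.mul, ih, pow_succ]

lemma bern_norm_le_one (m p : ℕ) (hp : p.Prime)
    (hnd : ¬ (p - 1) ∣ (m + 1)) : padicNorm p (bernoulli (m + 1) / ((m + 1 : ℕ) : ℚ)) ≤ 1 := by
  haveI : Fact p.Prime := ⟨hp⟩
  obtain ⟨g, hgp, hgn⟩ := exists_gen p (m + 1) hp hnd
  have ppos : (0:ℚ) < p := by exact_mod_cast hp.pos
  have hp1 : (1:ℚ) < p := by exact_mod_cast hp.one_lt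
  have pne : (p:ℚ) ≠ 0 := ne_of_gt ppos
  set e := padicValNat p (m + 1) with he_def
  set v1 := padicValNat p (m + 1 + 1) with hv1_def
  set L := (range (m + 1)).sup (fun i => (-(padicValRat p (bernoulli i))).toNat) with hL_def
  have hL : ∀ i ∈ range (m + 1), padicNorm p (bernoulli i) ≤ (p:ℚ) ^ (L:ℤ) := by
    intro i hi
    by_cases hb : bernoulli i = 0
    · rw [hb, padicNorm.zero]; positivity
    · rw [padicNorm.eq_zpow_of_nonzero hb]
      apply zpow_le_zpow_right₀ hp1.le
      have h1 : -(padicValRat p (bernoulli i)) ≤ ((-(padicValRat p (bernoulli i))).toNat : ℤ) :=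
        Int.self_le_toNat _
      have h2 : (-(padicValRat p (bernoulli i))).toNat ≤ L :=
        Finset.le_sup (f := fun i => (-(padicValRat p (bernoulli i))).toNat) hi
      omega
  set K := e + v1 + L + 1 with hK_def
  set N := p ^ K with hN_def
  have hNQ : ((N : ℕ) : ℚ) = (p:ℚ) ^ K := by rw [hN_def]; push_cast; ring
  have hNne : ((N : ℕ) : ℚ) ≠ 0 := by rw [hNQ]; positivity
  have hnne : ((m + 1 : ℕ) : ℚ) ≠ 0 := by positivity
  have hnat : ∀ a : ℕ, a ≠ 0 → padicNorm p (a:ℚ) = (p:ℚ) ^ (-(padicValNat p a : ℤ)) := by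
    intro a ha
    rw [padicNorm.eq_zpow_of_nonzero (by exact_mod_cast ha), padicValRat.of_nat]
  have hNnorm : padicNorm p ((N : ℕ) : ℚ) = (p:ℚ) ^ (-(K:ℤ)) := by
    rw [hNQ, padicNorm_pow', padicNorm.padicNorm_p hp.one_lt, inv_pow, ← zpow_natCast, ← zpow_neg]
  have hnnorm : padicNorm p ((m + 1 : ℕ) : ℚ) = (p:ℚ) ^ (-(e:ℤ)) := hnat _ (by omega)
  have hnnorm' : padicNorm p ((m:ℚ) + 1) = (p:ℚ) ^ (-(e:ℤ)) := by
    rw [← show ((m + 1 : ℕ) : ℚ) = (m:ℚ) + 1 from by push_cast; ring]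
    exact hnnorm
  have hn1norm : padicNorm p ((m + 1 + 1 : ℕ) : ℚ) = (p:ℚ) ^ (-(v1:ℤ)) := hnat _ (by omega)
  set S : ℤ := ∑ j ∈ range N, (j:ℤ) ^ (m + 1) with hS_def
  have hSdvd : (p:ℤ) ^ (K + e) ∣ S := by
    rw [hS_def, hN_def]
    exact key_dvd p hp m g hgp hgn e K
      (by exact_mod_cast (pow_padicValNat_dvd : p ^ e ∣ m + 1)) (by omega) (by omega)
  have hSnorm : padicNorm p (S : ℚ) ≤ (p:ℚ) ^ (-((K + e : ℕ) : ℤ)) :=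
    (padicNorm.dvd_iff_norm_le (p := p) (n := K + e) (z := S)).1 (by exact_mod_cast hSdvd)
  have hFa : ((S : ℤ) : ℚ) = ∑ i ∈ range (m + 1 + 1),
      bernoulli i * ((m + 1 + 1).choose i) * ((N : ℕ) : ℚ) ^ (m + 1 + 1 - i) / ((m:ℚ) + 1 + 1) := by
    have h := sum_range_pow N (m + 1)
    push_cast at h
    rw [hS_def]
    push_cast
    exact h
  set f : ℕ → ℚ := fun i =>
    bernoulli i * ((m + 1 + 1).choose i) * ((N : ℕ) : ℚ) ^ (m + 1 + 1 - i) / ((m:ℚ) + 1 + 1)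
    with hf_def
  have hsplit : ((S : ℤ) : ℚ) = (∑ i ∈ range (m + 1), f i)
      + bernoulli (m + 1) * ((N : ℕ) : ℚ) := by
    rw [hFa, Finset.sum_range_succ]
    congr 1
    simp only [Nat.choose_succ_self_right]
    have h2 : m + 1 + 1 - (m + 1) = 1 := by omega
    rw [h2, pow_one]
    have h3 : ((m:ℚ) + 1 + 1) ≠ 0 := by positivity
    push_cast
    field_simp
  have hc1 : ((m + 1 : ℕ) : ℚ) = (m:ℚ) + 1 := by push_cast; ring
  have hnne' : ((m:ℚ) + 1) ≠ 0 := by positivity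
  have hq : bernoulli (m + 1) / ((m + 1 : ℕ) : ℚ) =
      ((S : ℤ) : ℚ) / (((N : ℕ) : ℚ) * ((m:ℚ) + 1))
        + ∑ i ∈ range (m + 1), -(f i / (((N : ℕ) : ℚ) * ((m:ℚ) + 1))) := by
    have hsum : ∑ i ∈ range (m + 1), -(f i / (((N : ℕ) : ℚ) * ((m:ℚ) + 1)))
        = -((∑ i ∈ range (m + 1), f i) / (((N : ℕ) : ℚ) * ((m:ℚ) + 1))) := by
      rw [Finset.sum_neg_distrib, ← Finset.sum_div]
    rw [hsum, ← sub_eq_add_neg, div_sub_div_same, hc1,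
      div_eq_div_iff hnne' (mul_ne_zero hNne hnne')]
    linear_combination (-((m:ℚ) + 1)) * hsplit
  rw [hq]
  refine le_trans padicNorm.nonarchimedean (max_le ?_ ?_)
  · rw [padicNorm.div, padicNorm.mul, hNnorm, hnnorm']
    rw [div_le_one (by positivity)]
    calc padicNorm p ((S : ℤ) : ℚ) ≤ (p:ℚ) ^ (-((K + e : ℕ) : ℤ)) := hSnorm
    _ = (p:ℚ) ^ (-(K:ℤ)) * (p:ℚ) ^ (-(e:ℤ)) := by
        rw [← zpow_add₀ pne]
        congr 1
        push_cast
        ring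
  · apply padicNorm.sum_le' _ zero_le_one
    intro i hi
    have hilt : i < m + 1 := Finset.mem_range.1 hi
    rw [padicNorm.neg, padicNorm.div, hf_def]
    simp only []
    rw [padicNorm.div, padicNorm.mul, padicNorm.mul, padicNorm.mul, padicNorm_pow', hNnorm,
      hnnorm']
    have hn2 : padicNorm p ((m:ℚ) + 1 + 1) = (p:ℚ) ^ (-(v1:ℤ)) := by
      rw [← show ((m + 1 + 1 : ℕ) : ℚ) = (m:ℚ) + 1 + 1 from by push_cast; ring]
      exact hn1norm
    rw [hn2]
    have hch : padicNorm p (((m + 1 + 1).choose i : ℕ) : ℚ) ≤ 1 := padicNorm.of_nat _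
    have hbern := hL i hi
    have hchn0 : (0:ℚ) ≤ padicNorm p (((m + 1 + 1).choose i : ℕ) : ℚ) := padicNorm.nonneg _
    have hstep1 : padicNorm p (bernoulli i) * padicNorm p (((m + 1 + 1).choose i : ℕ) : ℚ)
        * ((p:ℚ) ^ (-(K:ℤ))) ^ (m + 1 + 1 - i)
        ≤ (p:ℚ) ^ (L:ℤ) * 1 * ((p:ℚ) ^ (-(K:ℤ))) ^ 2 := by
      have hx1 : (0:ℚ) ≤ (p:ℚ) ^ (-(K:ℤ)) := by positivity
      have hx2 : (p:ℚ) ^ (-(K:ℤ)) ≤ 1 := zpow_le_one_of_nonpos₀ hp1.le (by omega)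
      have hpow : ((p:ℚ) ^ (-(K:ℤ))) ^ (m + 1 + 1 - i) ≤ ((p:ℚ) ^ (-(K:ℤ))) ^ 2 :=
        pow_le_pow_of_le_one hx1 hx2 (by omega)
      have hb1 : padicNorm p (bernoulli i) * padicNorm p (((m + 1 + 1).choose i : ℕ) : ℚ)
          ≤ (p:ℚ) ^ (L:ℤ) * 1 :=
        mul_le_mul hbern hch hchn0 (by positivity)
      exact mul_le_mul hb1 hpow (by positivity) (by positivity)
    calc padicNorm p (bernoulli i) * padicNorm p (((m + 1 + 1).choose i : ℕ) : ℚ)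
          * ((p:ℚ) ^ (-(K:ℤ))) ^ (m + 1 + 1 - i) / (p:ℚ) ^ (-(v1:ℤ))
          / ((p:ℚ) ^ (-(K:ℤ)) * (p:ℚ) ^ (-(e:ℤ)))
        = padicNorm p (bernoulli i) * padicNorm p (((m + 1 + 1).choose i : ℕ) : ℚ)
          * ((p:ℚ) ^ (-(K:ℤ))) ^ (m + 1 + 1 - i)
          / (p:ℚ) ^ (-(v1:ℤ) + (-(K:ℤ) + -(e:ℤ))) := by
          rw [div_div, ← zpow_add₀ pne, ← zpow_add₀ pne]
    _ ≤ ((p:ℚ) ^ (L:ℤ) * 1 * ((p:ℚ) ^ (-(K:ℤ))) ^ 2)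
          / (p:ℚ) ^ (-(v1:ℤ) + (-(K:ℤ) + -(e:ℤ))) := by
        gcongr
    _ = (p:ℚ) ^ ((L:ℤ) + (-(K:ℤ)) * 2 - (-(v1:ℤ) + (-(K:ℤ) + -(e:ℤ)))) := by
        rw [mul_one, ← zpow_natCast ((p:ℚ) ^ (-(K:ℤ))) 2, ← zpow_mul, ← zpow_add₀ pne,
          ← zpow_sub₀ pne]
        norm_num
    _ ≤ 1 := zpow_le_one_of_nonpos₀ hp1.le (by push_cast; omega)

/-- Adams: if `p - 1 ∤ n` for a prime `p` and even positive `n`, then `B_n / n`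
is a `p`-integer, i.e. `p` does not divide the denominator of `B_n / n`. -/
theorem stmt_1 (n p : ℕ) (hn : 0 < n) (hne : Even n) (hp : p.Prime)
    (hnd : ¬ (p - 1) ∣ n) : ¬ p ∣ (bernoulli n / n).den := by
  haveI : Fact p.Prime := ⟨hp⟩
  obtain ⟨m, rfl⟩ : ∃ m, n = m + 1 := ⟨n - 1, by omega⟩
  have hnorm : padicNorm p (bernoulli (m + 1) / ((m + 1 : ℕ) : ℚ)) ≤ 1 :=
    bern_norm_le_one m p hp hnd
  set q := bernoulli (m + 1) / ((m + 1 : ℕ) : ℚ) with hqdef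
  intro hdvd
  by_cases h0 : q = 0
  · rw [h0] at hdvd
    have hden : (0:ℚ).den = 1 := rfl
    rw [hden] at hdvd
    exact hp.one_lt.ne' (Nat.dvd_one.mp hdvd)
  · have hnumnd : ¬ (p:ℤ) ∣ q.num := by
      intro hn'
      have h1 : p ∣ q.num.natAbs := by
        have h2 := Int.natAbs_dvd_natAbs.mpr hn'
        simpa using h2
      have h3 := Nat.dvd_gcd h1 hdvd
      rw [q.reduced] at h3
      exact hp.one_lt.ne' (Nat.dvd_one.mp h3)
    have hden1 : padicNorm p (q.num : ℚ) = 1 := (padicNorm.int_eq_one_iff _).2 hnumnd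
    have hdenlt : padicNorm p (q.den : ℚ) < 1 := (padicNorm.nat_lt_one_iff _).2 hdvd
    have hdenne : ((q.den : ℚ)) ≠ 0 := by
      have := q.den_pos
      positivity
    have hdenpos : 0 < padicNorm p (q.den : ℚ) := by
      rcases lt_or_eq_of_le (padicNorm.nonneg (p := p) ((q.den : ℚ))) with h | h
      · exact h
      · exact absurd (padicNorm.zero_of_padicNorm_eq_zero h.symm) hdenne
    have hsplitq : padicNorm p q = padicNorm p (q.num : ℚ) / padicNorm p (q.den : ℚ) := by
      conv_lhs => rw [← Rat.num_div_den q]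
      rw [padicNorm.div]
    rw [hsplitq, hden1, div_le_one hdenpos] at hnorm
    linarith
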